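/- arXiv:1505.02579 — 7 statements merged into one kernel-verified Lean document; each statement's English description precedes it below -/
import Mathlib

section
/- Let m be a monad with a LawfulMonad instance, and let g : m σ and s : σ → m PUnit satisfy the laws (GG): (do let x ← g; let y ← g; pure (x, y)) = (do let x ← g; pure (x, x)), and (GS): (do let x ← g; s x) = pure ⟨⟩. Then unused occurrences of g are discardable: for every k : m α, (do let _ ← g; k) = k. -/
universe u v

theorem unused_get_discardable
    {m : Type u → Type v} [Monad m] [LawfulMonad m] {σ : Type u}
    (g : m σ) (s : σ → m PUnit)
    (hGG : (do let x ← g; let y ← g; pure (x, y)) =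
           ((do let x ← g; pure (x, x)) : m (σ × σ)))
    (hGS : (do let x ← g; s x) = (pure PUnit.unit : m PUnit)) :
    ∀ {α : Type u} (k : m α), (do let _ ← g; k) = k := by
  have hGG' : ∀ {β : Type u} (f : σ → σ → m β),
      (do let x ← g; let y ← g; f x y) = (do let x ← g; f x x) := by
    intro β f
    have := congrArg (fun t => t >>= fun p => f p.1 p.2) hGG
    simpa [bind_assoc] using this
  intro α k
  calc (do let _ ← g; k)
      = (do let _ ← g; (do let x ← g; s x) >>= fun _ => k) := by
        rw [hGS]; simp
    _ = (do let x ← g; let y ← g; s y >>= fun _ => k) := by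
        simp [bind_assoc]
    _ = (do let x ← g; s x >>= fun _ => k) := hGG' _
    _ = (do let x ← g; s x) >>= fun _ => k := by simp [bind_assoc]
    _ = k := by rw [hGS]; simp
end

section
/- Let m be a lawful monad equipped with operations gT : m σ and sT : σ → m PUnit satisfying (GG): (do let x ← gT; let y ← gT; pure (x, y)) = (do let x ← gT; pure (x, x)); (GS): (do let x ← gT; sT x) = pure ⟨⟩; and (SG): for all x : σ, (do sT x; gT) = (do sT x; pure x). Define conc : m α → StateT σ m α by conc n = fun s => do let a ← n; let s' ← gT; pure (a, s'), and abs : StateT σ m α → m α by abs t = do let s ← gT; let (a, s') ← t s; sT s'; pure a. Then there is a data refinement from m to StateT σ m: (i) conc distributes over bind, i.e. conc (n >>= k) = conc n >>= fun a => conc (k a) for all n : m α and k : α → m β; and (ii) abs is a left inverse of conc, i.e. abs (conc n) = n for all n : m α. -/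
universe u v

def concM {m : Type u → Type v} [Monad m] {σ α : Type u} (gT : m σ) (n : m α) :
    StateT σ m α :=
  fun _s => do
    let a ← n
    let s' ← gT
    pure (a, s')

def absM {m : Type u → Type v} [Monad m] {σ α : Type u} (gT : m σ) (sT : σ → m PUnit)
    (t : StateT σ m α) : m α := do
  let s ← gT
  let (a, s') ← t.run s
  sT s'
  pure a

theorem data_refinement_from_m_to_StateT
    {m : Type u → Type v} [Monad m] [LawfulMonad m] {σ : Type u}
    (gT : m σ) (sT : σ → m PUnit)
    (hGG : (do let x ← gT; let y ← gT; pure (x, y)) =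
           ((do let x ← gT; pure (x, x)) : m (σ × σ)))
    (hGS : (do let x ← gT; sT x) = (pure PUnit.unit : m PUnit))
    (hSG : ∀ x : σ, (do sT x; gT) = (do sT x; pure x)) :
    (∀ {α β : Type u} (n : m α) (k : α → m β),
        concM gT (n >>= k) = concM gT n >>= fun a => concM gT (k a)) ∧
    (∀ {α : Type u} (n : m α), absM gT sT (concM gT n) = n) := by
  -- gT = do x ← gT; sT x; pure x
  have hstar : gT = gT >>= fun x => sT x >>= fun _ => pure x := by
    have h1 := congrArg (fun t : m (σ × σ) => t >>= fun p => sT p.2 >>= fun _ => pure p.1) hGG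
    simp only [bind_assoc, pure_bind] at h1
    calc gT = gT >>= fun x => pure x := by simp
      _ = gT >>= fun x => (gT >>= fun y => sT y) >>= fun _ => pure x := by rw [hGS]; simp
      _ = gT >>= fun x => gT >>= fun y => sT y >>= fun _ => pure x := by
            simp only [bind_assoc]
      _ = gT >>= fun x => sT x >>= fun _ => pure x := h1
  -- gT is discardable
  have hdrop : ∀ {β : Type u} (r : m β), gT >>= (fun _ => r) = r := by
    intro β r
    calc gT >>= (fun _ => r)
        = (gT >>= fun x => sT x >>= fun _ => pure x) >>= fun _ => r := by rw [← hstar]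
      _ = (gT >>= fun x => sT x) >>= fun _ => r := by simp [bind_assoc]
      _ = pure PUnit.unit >>= fun _ => r := by rw [hGS]
      _ = r := by simp
  constructor
  · intro α β n k
    funext s
    show (n >>= k) >>= (fun b => gT >>= fun s' => pure (b, s')) =
      (concM gT n) s >>= fun p => (concM gT (k p.1)) p.2
    simp only [concM, bind_assoc, pure_bind]
    congr 1
    funext a
    rw [hdrop]
  · intro α n
    show (gT >>= fun _ => (n >>= fun a => gT >>= fun s' => pure (a, s')) >>= fun p =>
        sT p.2 >>= fun _ => pure p.1) = n
    rw [hdrop]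
    simp only [bind_assoc, pure_bind]
    calc (n >>= fun a => gT >>= fun s' => sT s' >>= fun _ => pure a)
        = n >>= fun a => (gT >>= fun s' => sT s') >>= fun _ => pure a := by
          simp only [bind_assoc]
      _ = n >>= fun a => pure PUnit.unit >>= fun _ => pure a := by rw [hGS]
      _ = n := by simp
end

section
/- Let bx₁ and bx₂ be transparent well-behaved bx over the same lawful monad m, bx₁ with state S₁ between A and B and bx₂ with state S₂ between B and C, and let bx₁ ⨟ bx₂ be their composite. Then: (i) the composite set operations satisfy the set–get laws, i.e. (do (bx₁ ⨟ bx₂).setL a'; gets (fun (s₁, s₂) => readL₁ s₁)) = (do (bx₁ ⨟ bx₂).setL a'; pure a') for all a' : A, and (do (bx₁ ⨟ bx₂).setR c'; gets (fun (s₁, s₂) => readR₂ s₂)) = (do (bx₁ ⨟ bx₂).setR c'; pure c') for all c' : C; and (ii) the composite set operations restore consistency, i.e. (do (bx₁ ⨟ bx₂).setL a'; gets (fun (s₁, s₂) => readR₁ s₁)) = (do (bx₁ ⨟ bx₂).setL a'; gets (fun (s₁, s₂) => readL₂ s₂)) for all a' : A, and (do (bx₁ ⨟ bx₂).setR c'; gets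 (fun (s₁, s₂) => readR₁ s₁)) = (do (bx₁ ⨟ bx₂).setR c'; gets (fun (s₁, s₂) => readL₂ s₂)) for all c' : C. -/
universe u v

def getsS {m : Type u → Type v} [Monad m] {σ α : Type u} (f : σ → α) : StateT σ m α := do
  let s ← get
  pure (f s)

/-- A transparent bidirectional transformation over the monad `m`,
with state space `S`, between `A` and `B`. -/
structure TBX (m : Type u → Type v) (S A B : Type u) where
  readL : S → A
  readR : S → B
  setL : A → StateT S m PUnit
  setR : B → StateT S m PUnit

/-- Well-behavedness of a transparent bx: the laws (S_LG_L), (G_LS_L), (S_RG_R), (G_RS_R).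
(The get–get laws hold automatically since the gets are `T`-pure queries.) -/
structure TBX.WellBehaved {m : Type u → Type v} [Monad m] {S A B : Type u}
    (bx : TBX m S A B) : Prop where
  slgl : ∀ a : A, (do bx.setL a; getsS (m := m) bx.readL) = (do bx.setL a; pure a)
  glsl : (do let a ← getsS (m := m) bx.readL; bx.setL a) = (pure PUnit.unit : StateT S m PUnit)
  srgr : ∀ b : B, (do bx.setR b; getsS (m := m) bx.readR) = (do bx.setR b; pure b)
  grsr : (do let b ← getsS (m := m) bx.readR; bx.setR b) = (pure PUnit.unit : StateT S m PUnit)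

/-- Composition of transparent bx. -/
def TBX.comp {m : Type u → Type v} [Monad m] {S₁ S₂ A B C : Type u}
    (bx₁ : TBX m S₁ A B) (bx₂ : TBX m S₂ B C) : TBX m (S₁ × S₂) A C where
  readL := fun s => bx₁.readL s.1
  readR := fun s => bx₂.readR s.2
  setL := fun a' => fun s => do
    let (_, s₁') ← (bx₁.setL a').run s.1
    let (_, s₂') ← (bx₂.setL (bx₁.readR s₁')).run s.2
    pure (PUnit.unit, (s₁', s₂'))
  setR := fun c' => fun s => do
    let (_, s₂') ← (bx₂.setR c').run s.2
    let (_, s₁') ← (bx₁.setR (bx₂.readL s₂')).run s.1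
    pure (PUnit.unit, (s₁', s₂'))


private lemma TBX.key {m : Type u → Type v} [Monad m] [LawfulMonad m] {σ α β : Type u}
    (x : m (PUnit × σ)) (f : σ → α) (v : α)
    (h : (fun p : PUnit × σ => (f p.2, p.2)) <$> x = (fun p : PUnit × σ => (v, p.2)) <$> x)
    (k : α → σ → m β) :
    (x >>= fun p => k (f p.2) p.2) = (x >>= fun p => k v p.2) := by
  have h2 := congrArg (fun y => y >>= fun q : α × σ => k q.1 q.2) h
  simp only [map_eq_pure_bind, bind_assoc, pure_bind] at h2
  exact h2

private lemma TBX.ptw {m : Type u → Type v} [Monad m] [LawfulMonad m] {S A : Type u}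
    {setL : A → StateT S m PUnit} {readL : S → A} {a : A}
    (h : (do setL a; getsS (m := m) readL) = (do setL a; pure a)) (s : S) :
    (fun p : PUnit × S => (readL p.2, p.2)) <$> (setL a).run s =
    (fun p : PUnit × S => (a, p.2)) <$> (setL a).run s := by
  have := congrFun (congrArg StateT.run h) s
  simpa [getsS, StateT.run_bind] using this

theorem comp_set_get_laws_and_consistency_restoration
    {m : Type u → Type v} [Monad m] [LawfulMonad m] {S₁ S₂ A B C : Type u}
    (bx₁ : TBX m S₁ A B) (bx₂ : TBX m S₂ B C)
    (h₁ : bx₁.WellBehaved) (h₂ : bx₂.WellBehaved) :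
    (∀ a' : A,
      (do (bx₁.comp bx₂).setL a'; getsS (m := m) (fun s : S₁ × S₂ => bx₁.readL s.1)) =
      (do (bx₁.comp bx₂).setL a'; pure a')) ∧
    (∀ c' : C,
      (do (bx₁.comp bx₂).setR c'; getsS (m := m) (fun s : S₁ × S₂ => bx₂.readR s.2)) =
      (do (bx₁.comp bx₂).setR c'; pure c')) ∧
    (∀ a' : A,
      (do (bx₁.comp bx₂).setL a'; getsS (m := m) (fun s : S₁ × S₂ => bx₁.readR s.1)) =
      (do (bx₁.comp bx₂).setL a'; getsS (m := m) (fun s : S₁ × S₂ => bx₂.readL s.2))) ∧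
    (∀ c' : C,
      (do (bx₁.comp bx₂).setR c'; getsS (m := m) (fun s : S₁ × S₂ => bx₁.readR s.1)) =
      (do (bx₁.comp bx₂).setR c'; getsS (m := m) (fun s : S₁ × S₂ => bx₂.readL s.2))) := by
  refine ⟨fun a' => ?_, fun c' => ?_, fun a' => ?_, fun c' => ?_⟩ <;>
    (funext s; obtain ⟨s₁, s₂⟩ := s;
     simp only [TBX.comp, getsS, Bind.bind, StateT.bind, StateT.run, MonadState.get, getThe,
       MonadStateOf.get, StateT.get, Pure.pure, StateT.pure, pure_bind, bind_assoc] )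
  · exact TBX.key _ bx₁.readL a' (TBX.ptw (h₁.slgl a') s₁)
      (fun v t => bx₂.setL (bx₁.readR t) s₂ >>= fun q => pure (v, t, q.2))
  · exact TBX.key _ bx₂.readR c' (TBX.ptw (h₂.srgr c') s₂)
      (fun v t => bx₁.setR (bx₂.readL t) s₁ >>= fun q => pure (v, q.2, t))
  · refine bind_congr fun p => ?_
    exact (TBX.key _ bx₂.readL (bx₁.readR p.2) (TBX.ptw (h₂.slgl (bx₁.readR p.2)) s₂)
      (fun v t => pure (v, p.2, t))).symm
  · refine bind_congr fun p => ?_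
    exact TBX.key _ bx₁.readR (bx₂.readL p.2) (TBX.ptw (h₁.srgr (bx₂.readL p.2)) s₁)
      (fun v t => pure (v, t, p.2))
end

section
/- Let bx be a transparent well-behaved bx over a lawful monad m with state S between A and B, given by readL, readR, setL, setR, and let identity denote the transparent bx on A with state A, readL = readR = id and setL = setR = set. Let h : S → A × S be h s = (readL s, s). Then h conjugates bx onto the composite identity ⨟ bx: for all a' : A, b' : B and s : S, (identity ⨟ bx).setL a' (h s) = (do let (_, s') ← setL a' s; pure (⟨⟩, h s')); (identity ⨟ bx).setR b' (h s) = (do let (_, s') ← setR b' s; pure (⟨⟩, h s')); (identity ⨟ bx).getL (h s) = pure (readL s, h s); and (identity ⨟ bx).getR (h s) = pure (readR s, h s). (These are the component equations witnessing the bx isomorphism identity ⨟ bx ≡ bx from the identity law of composition.) -/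
universe u v

/-- The identity bx on `A`, with state `A`. -/
def TBX.identity (m : Type u → Type v) [Monad m] (A : Type u) : TBX m A A A where
  readL := id
  readR := id
  setL := fun a => set a
  setR := fun a => set a

theorem identity_comp_iso
    {m : Type u → Type v} [Monad m] [LawfulMonad m] {S A B : Type u}
    (bx : TBX m S A B) (hwb : bx.WellBehaved) :
    (∀ (a' : A) (s : S),
      (((TBX.identity m A).comp bx).setL a').run (bx.readL s, s) =
        (do let (_, s') ← (bx.setL a').run s
            pure (PUnit.unit, (bx.readL s', s')))) ∧
    (∀ (b' : B) (s : S),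
      (((TBX.identity m A).comp bx).setR b').run (bx.readL s, s) =
        (do let (_, s') ← (bx.setR b').run s
            pure (PUnit.unit, (bx.readL s', s')))) ∧
    (∀ s : S,
      (getsS (m := m) ((TBX.identity m A).comp bx).readL).run (bx.readL s, s) =
        pure (bx.readL s, (bx.readL s, s))) ∧
    (∀ s : S,
      (getsS (m := m) ((TBX.identity m A).comp bx).readR).run (bx.readL s, s) =
        pure (bx.readR s, (bx.readL s, s))) := by
  refine ⟨?_, ?_, ?_, ?_⟩
  · intro a' s
    have h := congrArg (fun t => StateT.run t s) (hwb.slgl a')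
    simp only [getsS, bind, StateT.bind, StateT.run, get, getThe, MonadStateOf.get,
      StateT.get, pure, StateT.pure] at h
    have h2 := congrArg (fun t => t >>= fun (p : A × S) => (pure (PUnit.unit, (p.1, p.2)) : m (PUnit × (A × S)))) h
    simp only [bind_assoc, pure_bind] at h2
    simp only [TBX.comp, TBX.identity, StateT.run, bind, StateT.bind, set, StateT.set,
      pure, StateT.pure, pure_bind]
    exact h2.symm
  · intro b' s
    simp only [TBX.comp, TBX.identity, StateT.run, bind, StateT.bind, set, StateT.set,
      pure, StateT.pure, pure_bind]
  · intro s
    simp only [TBX.comp, TBX.identity, getsS, StateT.run, bind, StateT.bind, get, getThe,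
      MonadStateOf.get, StateT.get, pure, StateT.pure, pure_bind, id]
  · intro s
    simp only [TBX.comp, TBX.identity, getsS, StateT.run, bind, StateT.bind, get, getThe,
      MonadStateOf.get, StateT.get, pure, StateT.pure, pure_bind]
end

section
/- Let bx₁, bx₂, bx₃ be transparent well-behaved bx over the same lawful monad m, with states S₁, S₂, S₃, between A and B, B and C, and C and D respectively. Then the two composites (bx₁ ⨟ bx₂) ⨟ bx₃ (with state (S₁ × S₂) × S₃) and bx₁ ⨟ (bx₂ ⨟ bx₃) (with state S₁ × (S₂ × S₃)) agree up to reassociation of the state: for all a' : A, d' : D and s₁ : S₁, s₂ : S₂, s₃ : S₃, ((bx₁ ⨟ bx₂) ⨟ bx₃).setL a' ((s₁, s₂), s₃) = (do let (_, (s₁', (s₂', s₃'))) ← (bx₁ ⨟ (bx₂ ⨟ bx₃)).setL a' (s₁, (s₂, s₃)); pure (⟨⟩, ((s₁', s₂'), s₃'))) and ((bx₁ ⨟ bx₂) ⨟ bx₃).setR d' ((s₁, s₂), s₃) = (do let (_, (s₁', (s₂', s₃'))) ← (bx₁ ⨟ (bx₂ ⨟ bx₃)).setR d' (s₁, (s₂,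 s₃)); pure (⟨⟩, ((s₁', s₂'), s₃'))). (These are the component equations witnessing the associativity law of bx composition up to the reassociation isomorphism of state spaces.) -/
universe u v

theorem comp_assoc_up_to_reassociation
    {m : Type u → Type v} [Monad m] [LawfulMonad m] {S₁ S₂ S₃ A B C D : Type u}
    (bx₁ : TBX m S₁ A B) (bx₂ : TBX m S₂ B C) (bx₃ : TBX m S₃ C D)
    (h₁ : bx₁.WellBehaved) (h₂ : bx₂.WellBehaved) (h₃ : bx₃.WellBehaved) :
    (∀ (a' : A) (s₁ : S₁) (s₂ : S₂) (s₃ : S₃),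
      (((bx₁.comp bx₂).comp bx₃).setL a').run ((s₁, s₂), s₃) =
        (do let (_, s₁', s₂', s₃') ← ((bx₁.comp (bx₂.comp bx₃)).setL a').run (s₁, (s₂, s₃))
            pure (PUnit.unit, ((s₁', s₂'), s₃')))) ∧
    (∀ (d' : D) (s₁ : S₁) (s₂ : S₂) (s₃ : S₃),
      (((bx₁.comp bx₂).comp bx₃).setR d').run ((s₁, s₂), s₃) =
        (do let (_, s₁', s₂', s₃') ← ((bx₁.comp (bx₂.comp bx₃)).setR d').run (s₁, (s₂, s₃))
            pure (PUnit.unit, ((s₁', s₂'), s₃')))) := by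
  constructor <;> intro x s₁ s₂ s₃ <;>
    simp [TBX.comp, StateT.run, bind, StateT.bind, pure, StateT.pure, bind_assoc]
end

section
/- Let m be a lawful monad with a polymorphic zero element err, i.e. a family err : ∀ α, m α such that (err β >>= k) = err γ for all k : β → m γ, and (n >>= fun _ => err γ) = err γ for all n : m β. Let f : A → Option B and g : B → Option A be partial inverses: for all a and b, f a = some b ↔ g b = some a. Define a bx over m with state A × B between A and B by getL := gets Prod.fst, getR := gets Prod.snd, setL a' := match f a' with | some b' => set (a', b') | none => monadLift (err PUnit), and setR b' := match g b' with | some a' => set (a', b') | none => monadLift (err PUnit). Then: (i) (S_LG_L) (do setL a'; getL) = (do setL a'; pure a') and (S_RG_R) (do setR b'; getR) = (do setR b'; pure b') hold for all a' : A and b' : B; and (ii) on every consistent state, i.e. every (a, b) : A × B with f a = some b, the get–set laws hold pointwise: ((do let x ← getL; setL x) (a, b) : m (PUnit × (A × B))) = pure (⟨⟩, (a, b)) and ((do let y ← getR; setR y) (a, b) : m (PUnit × (A × B))) = pure (⟨⟩, (a, b)). -/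
universe u v

/-- The left set operation of the partial bx. -/
def pSetL {m : Type u → Type v} [Monad m] {A B : Type u}
    (err : ∀ α : Type u, m α) (f : A → Option B) (a' : A) : StateT (A × B) m PUnit :=
  match f a' with
  | some b' => set (a', b')
  | none => monadLift (err PUnit)

/-- The right set operation of the partial bx. -/
def pSetR {m : Type u → Type v} [Monad m] {A B : Type u}
    (err : ∀ α : Type u, m α) (g : B → Option A) (b' : B) : StateT (A × B) m PUnit :=
  match g b' with
  | some a' => set (a', b')
  | none => monadLift (err PUnit)

theorem partial_bx_wellBehaved
    {m : Type u → Type v} [Monad m] [LawfulMonad m] {A B : Type u}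
    (err : ∀ α : Type u, m α)
    (herr₁ : ∀ {β γ : Type u} (k : β → m γ), err β >>= k = err γ)
    (herr₂ : ∀ {β γ : Type u} (n : m β), (n >>= fun _ => err γ) = err γ)
    (f : A → Option B) (g : B → Option A)
    (hfg : ∀ (a : A) (b : B), f a = some b ↔ g b = some a) :
    (∀ a' : A,
      (do pSetL err f a'; getsS (m := m) (Prod.fst : A × B → A)) =
      (do pSetL err f a'; pure a')) ∧
    (∀ b' : B,
      (do pSetR err g b'; getsS (m := m) (Prod.snd : A × B → B)) =
      (do pSetR err g b'; pure b')) ∧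
    (∀ (a : A) (b : B), f a = some b →
      (((do let x ← getsS (m := m) (Prod.fst : A × B → A)
            pSetL err f x) : StateT (A × B) m PUnit).run (a, b) =
         pure (PUnit.unit, (a, b))) ∧
      (((do let y ← getsS (m := m) (Prod.snd : A × B → B)
            pSetR err g y) : StateT (A × B) m PUnit).run (a, b) =
         pure (PUnit.unit, (a, b)))) := by
  refine ⟨?_, ?_, ?_⟩
  · intro a'
    unfold pSetL getsS
    cases hfa : f a' with
    | some b' =>
      funext s
      simp [StateT.run, bind, StateT.bind, get, getThe, MonadStateOf.get, StateT.get,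
        set, StateT.set, pure, StateT.pure]
    | none =>
      funext s
      simp [StateT.run, bind, StateT.bind, monadLift, MonadLift.monadLift, StateT.lift,
        get, getThe, MonadStateOf.get, StateT.get, pure, StateT.pure]
      simp only [← bind_pure_comp, herr₁]
  · intro b'
    unfold pSetR getsS
    cases hgb : g b' with
    | some a' =>
      funext s
      simp [StateT.run, bind, StateT.bind, get, getThe, MonadStateOf.get, StateT.get,
        set, StateT.set, pure, StateT.pure]
    | none =>
      funext s
      simp [StateT.run, bind, StateT.bind, monadLift, MonadLift.monadLift, StateT.lift,
        get, getThe, MonadStateOf.get, StateT.get, pure, StateT.pure]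
      simp only [← bind_pure_comp, herr₁]
  · intro a b hab
    have hba : g b = some a := (hfg a b).mp hab
    constructor
    · simp [getsS, pSetL, StateT.run, bind, StateT.bind, get, getThe, MonadStateOf.get,
        StateT.get, set, StateT.set, pure, StateT.pure, hab]
    · simp [getsS, pSetR, StateT.run, bind, StateT.bind, get, getThe, MonadStateOf.get,
        StateT.get, set, StateT.set, pure, StateT.pure, hba]
end

section
/- Let m be a lawful monad, let A and B have decidable equality, and let bx be a transparent well-behaved bx over m with state S between A and B, with data readL, readR, setL, setR. For sigA : A → m PUnit and sigB : B → m PUnit define setL' a' := do let a ← gets readL; setL a'; monadLift (if a ≠ a' then sigA a' else pure ⟨⟩) and setR' b' := do let b ← gets readR; setR b'; monadLift (if b ≠ b' then sigB b' else pure ⟨⟩). Then the bx with operations (gets readL, setL', gets readR, setR') is again transparent well-behaved: it satisfies (S_LG_L) (do setL' a; gets readL) = (do setL' a; pure a) for all a : A; (G_LS_L) (do let a ← gets readL; setL' a) = pure ⟨⟩; and the dual laws (S_RG_R) (do setR' b; gets readR) = (do setR' b; pure b) for all b : B and (G_RS_R) (do let b ← gets readR; setR' b) = pure ⟨⟩.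 -/
universe u v

/-- The signalling set operation: set, and signal if the view actually changed. -/
def sigSet {m : Type u → Type v} [Monad m] {S A : Type u} [DecidableEq A]
    (readL : S → A) (setL : A → StateT S m PUnit) (sigA : A → m PUnit) (a' : A) :
    StateT S m PUnit := do
  let a ← getsS (m := m) readL
  setL a'
  monadLift (if a ≠ a' then sigA a' else pure PUnit.unit)

section Helpers
variable {m : Type u → Type v} [Monad m] [LawfulMonad m] {S A : Type u} [DecidableEq A]
  (readL : S → A) (setL : A → StateT S m PUnit) (sigA : A → m PUnit)

lemma sig_slgl
    (slgl : ∀ a : A, (do setL a; getsS (m := m) readL) = (do setL a; pure a)) :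
    ∀ a : A,
      (do sigSet readL setL sigA a; getsS (m := m) readL) =
      (do sigSet readL setL sigA a; pure a) := by
  intro a
  funext s
  have h := congrFun (slgl a) s
  simp only [sigSet, getsS, bind, StateT.bind, get, getThe, MonadStateOf.get, StateT.get,
    pure, StateT.pure, monadLift, MonadLift.monadLift, StateT.lift, pure_bind, bind_assoc] at h ⊢
  have h2 := congrArg (fun x => x >>= fun (p : A × S) =>
    (if readL s ≠ a then sigA a else pure PUnit.unit) >>= fun u => (pure (p.1, p.2) : m (A × S))) h
  simpa [bind_assoc] using h2

lemma sig_glsl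
    (glsl : (do let a ← getsS (m := m) readL; setL a) = (pure PUnit.unit : StateT S m PUnit)) :
    (do let a ← getsS (m := m) readL; sigSet readL setL sigA a) =
      (pure PUnit.unit : StateT S m PUnit) := by
  funext s
  have h := congrFun glsl s
  simp only [getsS, sigSet, bind, StateT.bind, get, getThe, MonadStateOf.get, StateT.get,
    pure, StateT.pure, monadLift, MonadLift.monadLift, StateT.lift, pure_bind, bind_assoc] at h ⊢
  simp only [ne_eq, not_true_eq_false, if_neg, ite_self, if_false, pure_bind]
  rw [show (fun (q : PUnit × S) => (pure (PUnit.unit, q.2) : m (PUnit × S))) =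
    (fun q => pure (q.1, q.2)) from funext fun q => by cases q.1; rfl]
  simpa using h

end Helpers

theorem signal_bx_wellBehaved
    {m : Type u → Type v} [Monad m] [LawfulMonad m] {S A B : Type u}
    [DecidableEq A] [DecidableEq B]
    (readL : S → A) (readR : S → B)
    (setL : A → StateT S m PUnit) (setR : B → StateT S m PUnit)
    (sigA : A → m PUnit) (sigB : B → m PUnit)
    (slgl : ∀ a : A, (do setL a; getsS (m := m) readL) = (do setL a; pure a))
    (glsl : (do let a ← getsS (m := m) readL; setL a) = (pure PUnit.unit : StateT S m PUnit))
    (srgr : ∀ b : B, (do setR b; getsS (m := m) readR) = (do setR b; pure b))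
    (grsr : (do let b ← getsS (m := m) readR; setR b) = (pure PUnit.unit : StateT S m PUnit)) :
    (∀ a : A,
      (do sigSet readL setL sigA a; getsS (m := m) readL) =
      (do sigSet readL setL sigA a; pure a)) ∧
    ((do let a ← getsS (m := m) readL; sigSet readL setL sigA a) =
      (pure PUnit.unit : StateT S m PUnit)) ∧
    (∀ b : B,
      (do sigSet readR setR sigB b; getsS (m := m) readR) =
      (do sigSet readR setR sigB b; pure b)) ∧
    ((do let b ← getsS (m := m) readR; sigSet readR setR sigB b) =
      (pure PUnit.unit : StateT S m PUnit)) := by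
  exact ⟨sig_slgl _ _ _ slgl, sig_glsl _ _ _ glsl, sig_slgl _ _ _ srgr, sig_glsl _ _ _ grsr⟩
end
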